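/- arXiv:2001.07894 — 2 statements merged into one kernel-verified Lean document; each statement's English description precedes it below -/
import Mathlib

section
/- Let c be the center of the star S_n, let ν be an endpoint of the path P_n, and let v be any vertex of any n-vertex tree T. Then for every integer k ≥ 0, n_k(c, S_n) ≥ n_k(v, T) ≥ n_k(ν, P_n). -/
open SimpleGraph

/-- A subtree of `G` is a nonempty connected acyclic subgraph of `G`. -/
def IsSubtree {V : Type*} {G : SimpleGraph V} (H : G.Subgraph) : Prop :=
  H.Connected ∧ H.coe.IsAcyclic

/-- `nk G k` : the number of subtrees of `G` with exactly `k` vertices. -/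
noncomputable def nk {V : Type*} (G : SimpleGraph V) (k : ℕ) : ℕ :=
  Nat.card {H : G.Subgraph // IsSubtree H ∧ H.verts.ncard = k}

/-- number of `k`-vertex subtrees of `G` containing the vertex `v`. -/
noncomputable def nkAt {V : Type*} (G : SimpleGraph V) (v : V) (k : ℕ) : ℕ :=
  Nat.card {H : G.Subgraph // IsSubtree H ∧ v ∈ H.verts ∧ H.verts.ncard = k}

/-- `nT G` : total number of subtrees of `G`, counting the empty subtree once. -/
noncomputable def nT {V : Type*} (G : SimpleGraph V) : ℕ :=
  1 + Nat.card {H : G.Subgraph // IsSubtree H}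

/-- number of subtrees of `G` containing the vertex `v`. -/
noncomputable def nAt {V : Type*} (G : SimpleGraph V) (v : V) : ℕ :=
  Nat.card {H : G.Subgraph // IsSubtree H ∧ v ∈ H.verts}

/-- the path on `n` vertices `0 - 1 - ⋯ - (n-1)`. -/
def pathG (n : ℕ) : SimpleGraph (Fin n) :=
  SimpleGraph.fromRel (fun u v => v.val = u.val + 1)

/-- the cycle on `n` vertices. -/
def cycG (n : ℕ) : SimpleGraph (Fin n) :=
  SimpleGraph.fromRel (fun u v => v.val = u.val + 1 ∨ (u.val = 0 ∧ v.val + 1 = n))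

/-- the star on `n` vertices with center `0`. -/
def starG (n : ℕ) : SimpleGraph (Fin n) :=
  SimpleGraph.fromRel (fun u _ => u.val = 0)

/-- `USnl n l` : the cycle `C_l` (on `0,…,l-1`) with `n - l` pendant vertices attached
to the vertex `0`. -/
def USnl (n l : ℕ) : SimpleGraph (Fin n) :=
  SimpleGraph.fromRel (fun u v =>
    (v.val = u.val + 1 ∧ v.val < l) ∨ (u.val = 0 ∧ v.val + 1 = l) ∨ (u.val = 0 ∧ l ≤ v.val))

/-- `UPnl n l` : the cycle `C_l` (on `0,…,l-1`) with a pendant path of length `n - l`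
attached to the vertex `l-1`. -/
def UPnl (n l : ℕ) : SimpleGraph (Fin n) :=
  SimpleGraph.fromRel (fun u v => v.val = u.val + 1 ∨ (u.val = 0 ∧ v.val + 1 = l))

/-- `US_n` : the star `S_n` together with an edge joining two of its leaves. -/
def USn (n : ℕ) : SimpleGraph (Fin n) := USnl n 3

/-- `UP_n` : a triangle with a pendant path, obtained by identifying a vertex of `C_3`
with an end of `P_{n-2}`. -/
def UPn (n : ℕ) : SimpleGraph (Fin n) := UPnl n 3

/-- the Merrifield–Simmons index: the number of independent vertex subsets
(including the empty set). -/
noncomputable def sigmaG {V : Type*} (G : SimpleGraph V) : ℕ :=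
  Nat.card {s : Set V // ∀ u ∈ s, ∀ v ∈ s, ¬ G.Adj u v}

/-- the Hosoya index: the number of matchings (including the empty one). -/
noncomputable def hosoya {V : Type*} (G : SimpleGraph V) : ℕ :=
  Nat.card {s : Set (Sym2 V) // s ⊆ G.edgeSet ∧
    s.Pairwise (fun e f => ∀ v, ¬(v ∈ e ∧ v ∈ f))}

/-- the Wiener index: the sum of the distances over all unordered pairs of vertices. -/
noncomputable def wiener {V : Type*} [Fintype V] (G : SimpleGraph V) : ℕ :=
  (∑ u : V, ∑ v : V, G.dist u v) / 2


instance subgraphFinite {V : Type*} [Finite V] (G : SimpleGraph V) : Finite G.Subgraph :=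
  Finite.of_injective (fun H => (H.verts, H.Adj))
    (fun H K h => Subgraph.ext (congrArg Prod.fst h) (congrArg Prod.snd h))

lemma subgraph_acyclic {V : Type*} {G : SimpleGraph V} (hG : G.IsAcyclic) (H : G.Subgraph) :
    H.coe.IsAcyclic := fun _ c hc => hG (c.map H.hom) (hc.map Subgraph.hom_injective)

lemma adj_of_map_walk {V : Type*} {G : SimpleGraph V} {H : G.Subgraph} {x y : H.verts}
    (w : H.coe.Walk x y) {u v : V} (h : s(u, v) ∈ (w.map H.hom).edges) : H.Adj u v := by
  rw [Walk.edges_map] at h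
  obtain ⟨e, he, heq⟩ := List.mem_map.mp h
  induction e with
  | h a b =>
    have hadj : H.Adj a.1 b.1 := by
      have := w.adj_of_mem_edges he
      rwa [Subgraph.coe_adj] at this
    simp only [Sym2.map_pair_eq, Sym2.eq_iff] at heq
    rcases heq with ⟨h1, h2⟩ | ⟨h1, h2⟩
    · rw [← h1, ← h2]; simpa using hadj
    · rw [← h1, ← h2]; simpa using hadj.symm

lemma adj_of_acyclic {V : Type*} {G : SimpleGraph V} (hG : G.IsAcyclic) {H : G.Subgraph}
    (hc : H.Connected) {u v : V} (hu : u ∈ H.verts) (hv : v ∈ H.verts) (h : G.Adj u v) :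
    H.Adj u v := by
  classical
  obtain ⟨w⟩ := hc ⟨u, hu⟩ ⟨v, hv⟩
  have hq : (Walk.cons h Walk.nil).IsPath := by simp [h.ne]
  let W : G.Walk u v := (w.map H.hom).copy rfl rfl
  have hun := isAcyclic_iff_path_unique.mp hG W.toPath ⟨Walk.cons h Walk.nil, hq⟩
  have hmem : s(u, v) ∈ (W.toPath : G.Walk u v).edges := by
    rw [hun]; simp
  have h1 := Walk.edges_toPath_subset W hmem
  simp only [W, Walk.edges_copy] at h1
  exact adj_of_map_walk w h1

lemma subtree_ext {V : Type*} {G : SimpleGraph V} (hG : G.IsAcyclic) {H1 H2 : G.Subgraph}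
    (h1 : H1.Connected) (h2 : H2.Connected) (hv : H1.verts = H2.verts) : H1 = H2 := by
  apply Subgraph.ext hv
  funext a b
  apply propext
  constructor
  · intro h
    exact adj_of_acyclic hG h2 (hv ▸ H1.edge_vert h) (hv ▸ H1.edge_vert h.symm) (H1.adj_sub h)
  · intro h
    exact adj_of_acyclic hG h1 (hv ▸ H2.edge_vert h) (hv ▸ H2.edge_vert h.symm) (H2.adj_sub h)

lemma acyclic_of_center {V : Type*} {G : SimpleGraph V} (c : V)
    (h : ∀ x y, G.Adj x y → x = c ∨ y = c) : G.IsAcyclic := by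
  intro a p hp
  have h3 := hp.three_le_length
  cases p with
  | nil => simp at h3
  | cons h1 q =>
    cases q with
    | nil => simp at h3
    | cons h2 r =>
      cases r with
      | nil => simp [Walk.length_cons] at h3
      | cons h3' r' =>
        rename_i b d e
        have hnd := hp.edges_nodup
        simp only [Walk.edges_cons, List.nodup_cons, List.mem_cons] at hnd
        have had : a ≠ d := by
          intro hh; subst hh
          exact hnd.1 (Or.inl (Sym2.eq_swap))
        have hbe : b ≠ e := by
          intro hh; subst hh
          exact hnd.2.1 (Or.inl Sym2.eq_swap)
        have hbc : b = c := by
          rcases h _ _ h1 with h' | h'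
          · rcases h _ _ h2 with h'' | h''
            · exact h''
            · exact absurd (h'.trans h''.symm) had
          · exact h'
        have hdc : d = c := by
          rcases h _ _ h2 with h' | h'
          · rcases h _ _ h3' with h'' | h''
            · exact h''
            · exact absurd (h'.trans h''.symm) hbe
          · exact h'
        exact G.irrefl (hbc ▸ hdc ▸ h2)

lemma path_walk_down {n : ℕ} {H : (pathG n).Subgraph} :
    ∀ {x z : ↥H.verts}, H.coe.Walk x z → (z : Fin n).val = 0 →
      ∀ i : ℕ, i ≤ (x : Fin n).val → ∃ u ∈ H.verts, u.val = i := by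
  intro x z w
  induction w with
  | @nil u =>
    intro hz i hi
    refine ⟨u.1, u.2, ?_⟩
    have hx0 : (u : Fin n).val = 0 := hz
    omega
  | @cons a b z' h w ih =>
    intro hz i hi
    have hadj : (pathG n).Adj a.1 b.1 := H.adj_sub (by rwa [Subgraph.coe_adj] at h)
    simp only [pathG, fromRel_adj] at hadj
    by_cases hy : i ≤ (b : Fin n).val
    · exact ih hz i hy
    · exact ⟨a.1, a.2, by omega⟩

lemma path_walk_edge {n : ℕ} {H : (pathG n).Subgraph} :
    ∀ {x z : ↥H.verts}, H.coe.Walk x z → ∀ i : ℕ, i < (x : Fin n).val → (z : Fin n).val ≤ i →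
      ∃ a b : Fin n, a.val = i + 1 ∧ b.val = i ∧ H.Adj a b := by
  intro x z w
  induction w with
  | nil => intro i h1 h2; omega
  | @cons a b z' h w ih =>
    intro i h1 h2
    by_cases hb : i < (b : Fin n).val
    · exact ih i hb h2
    · have hadj : H.Adj a.1 b.1 := by rwa [Subgraph.coe_adj] at h
      have hpadj := H.adj_sub hadj
      simp only [pathG, fromRel_adj] at hpadj
      have h1' : (a : Fin n).val = i + 1 := by omega
      have h2' : (b : Fin n).val = i := by omega
      exact ⟨a.1, b.1, h1', h2', hadj⟩

lemma ncard_fin_lt {n m : ℕ} : {j : Fin n | j.val < m}.ncard ≤ m := by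
  have h : Nat.card {j : Fin n | j.val < m} ≤ Nat.card (Fin m) :=
    Nat.card_le_card_of_injective (fun j => ⟨j.1.val, j.2⟩)
      (fun a b hab => Subtype.ext (Fin.ext (by simpa using hab)))
  have hm : Nat.card (Fin m) = m := by simp
  rwa [Nat.card_coe_set_eq, hm] at h

lemma ncard_fin_le {n : ℕ} (i : Fin n) : i.val + 1 ≤ {j : Fin n | j.val ≤ i.val}.ncard := by
  have h : Nat.card (Fin (i.val + 1)) ≤ Nat.card {j : Fin n | j.val ≤ i.val} :=
    Nat.card_le_card_of_injective
      (fun j => ⟨⟨j.val, lt_of_le_of_lt (Nat.le_of_lt_succ j.2) i.2⟩, Nat.le_of_lt_succ j.2⟩)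
      (fun a b hab => Fin.ext (by simpa [Fin.ext_iff, Subtype.ext_iff] using hab))
  have hm : Nat.card (Fin (i.val + 1)) = i.val + 1 := by simp
  rwa [Nat.card_coe_set_eq, hm] at h

lemma path_verts_eq {n k : ℕ} (hn : 0 < n) {H : (pathG n).Subgraph}
    (hc : H.Connected) (h0 : (⟨0, hn⟩ : Fin n) ∈ H.verts) (hk : H.verts.ncard = k) :
    H.verts = {i : Fin n | i.val < k} := by
  have hdown : ∀ j ∈ H.verts, ∀ i : Fin n, i.val ≤ j.val → i ∈ H.verts := by
    intro j hj i hij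
    obtain ⟨w⟩ := hc ⟨j, hj⟩ ⟨⟨0, hn⟩, h0⟩
    obtain ⟨u, hu, huv⟩ := path_walk_down w rfl i.val hij
    have : u = i := Fin.ext huv
    exact this ▸ hu
  ext i
  simp only [Set.mem_setOf_eq]
  constructor
  · intro hi
    by_contra hik
    have hsub : {j : Fin n | j.val ≤ i.val} ⊆ H.verts := fun j hj => hdown i hi j hj
    have h1 := ncard_fin_le i
    have h2 := Set.ncard_le_ncard hsub (Set.toFinite _)
    omega
  · intro hik
    by_contra hi
    have hsub : H.verts ⊆ {j : Fin n | j.val < i.val} := by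
      intro j hj
      by_contra h'
      exact hi (hdown j hj i (by simpa using h'))
    have h1 := ncard_fin_lt (n := n) (m := i.val)
    have h2 := Set.ncard_le_ncard hsub (Set.toFinite _)
    omega

lemma path_subtree_unique {n k : ℕ} (hn : 0 < n) {H1 H2 : (pathG n).Subgraph}
    (hc1 : H1.Connected) (h01 : (⟨0, hn⟩ : Fin n) ∈ H1.verts) (hk1 : H1.verts.ncard = k)
    (hc2 : H2.Connected) (h02 : (⟨0, hn⟩ : Fin n) ∈ H2.verts) (hk2 : H2.verts.ncard = k) :
    H1 = H2 := by
  have hv1 := path_verts_eq hn hc1 h01 hk1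
  have hv2 := path_verts_eq hn hc2 h02 hk2
  have key : ∀ (H : (pathG n).Subgraph), H.Connected → H.verts = {i : Fin n | i.val < k} →
      ∀ a b : Fin n, H.Adj a b ↔ ((pathG n).Adj a b ∧ a.val < k ∧ b.val < k) := by
    intro H hc hv a b
    constructor
    · intro h
      refine ⟨H.adj_sub h, ?_, ?_⟩
      · have := H.edge_vert h; rwa [hv] at this
      · have := H.edge_vert h.symm; rwa [hv] at this
    · rintro ⟨hadj, ha, hb⟩
      have h0mem : (⟨0, hn⟩ : Fin n) ∈ H.verts := by
        rw [hv]; simp only [Set.mem_setOf_eq]; omega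
      have key2 : ∀ c d : Fin n, c.val = d.val + 1 → c.val < k → H.Adj c d := by
        intro c d hcd hck
        have hcmem : c ∈ H.verts := by rw [hv]; exact hck
        obtain ⟨w⟩ := hc ⟨c, hcmem⟩ ⟨⟨0, hn⟩, h0mem⟩
        obtain ⟨a', b', ha', hb', hadj'⟩ := path_walk_edge w d.val
          (by show d.val < c.val; omega) (by show (⟨0, hn⟩ : Fin n).val ≤ d.val; simp)
        have hac : a' = c := Fin.ext (by omega)
        have hbd : b' = d := Fin.ext hb'
        exact hac ▸ hbd ▸ hadj'
      have hab := hadj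
      simp only [pathG, fromRel_adj] at hab
      rcases hab.2 with h' | h'
      · exact (key2 b a h' hb).symm
      · exact key2 a b h' ha
  apply Subgraph.ext (hv1.trans hv2.symm)
  funext a b
  exact propext ((key H1 hc1 hv1 a b).trans (key H2 hc2 hv2 a b).symm)

lemma exists_boundary {V : Type*} {G : SimpleGraph V} {S : Set V} :
    ∀ {a b : V}, G.Walk a b → a ∈ S → b ∉ S → ∃ u ∈ S, ∃ x, x ∉ S ∧ G.Adj u x := by
  intro a b w
  induction w with
  | nil => intro ha hb; exact absurd ha hb
  | @cons a c b h w ih =>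
    intro ha hb
    by_cases hc : c ∈ S
    · exact ih hc hb
    · exact ⟨a, ha, c, hc, h⟩

lemma connected_induce_insert {V : Type*} {G : SimpleGraph V} {S : Set V}
    (hS : ((⊤ : G.Subgraph).induce S).Connected) {u w : V} (hu : u ∈ S) (hadj : G.Adj u w) :
    ((⊤ : G.Subgraph).induce (insert w S)).Connected := by
  have h1 : (((⊤ : G.Subgraph).induce S) ⊔ G.subgraphOfAdj hadj).Connected := by
    apply Subgraph.connected_sup hS.preconnected (Subgraph.subgraphOfAdj_connected hadj).preconnected
    exact ⟨u, by simp [hu]⟩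
  apply h1.mono
  · apply sup_le
    · exact Subgraph.induce_mono le_rfl (Set.subset_insert w S)
    · constructor
      · intro x hx
        simp only [subgraphOfAdj_verts, Set.mem_insert_iff, Set.mem_singleton_iff] at hx
        rcases hx with rfl | rfl
        · exact Set.mem_insert_of_mem _ hu
        · exact Set.mem_insert _ _
      · intro x y hxy
        rw [subgraphOfAdj_adj, Sym2.eq_iff] at hxy
        rcases hxy with ⟨h1', h2'⟩ | ⟨h1', h2'⟩ <;> subst h1' <;> subst h2' <;>
          simp [Subgraph.induce_adj, hu, hadj, hadj.symm, Set.mem_insert_iff]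
  · ext x
    simp only [Subgraph.verts_sup, Subgraph.induce_verts, subgraphOfAdj_verts, Set.mem_union,
      Set.mem_insert_iff, Set.mem_singleton_iff]
    constructor
    · rintro (hx | rfl | rfl)
      · exact Or.inr hx
      · exact Or.inr hu
      · exact Or.inl rfl
    · rintro (rfl | hx)
      · exact Or.inr (Or.inr rfl)
      · exact Or.inl hx

lemma exists_connected_set {n : ℕ} {T : SimpleGraph (Fin n)} (hT : T.Connected) (v : Fin n) :
    ∀ k, 1 ≤ k → k ≤ n →
      ∃ S : Set (Fin n), v ∈ S ∧ S.ncard = k ∧ ((⊤ : T.Subgraph).induce S).Connected := by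
  intro k
  induction k with
  | zero => omega
  | succ k ih =>
    intro h1 hn2
    rcases Nat.eq_or_lt_of_le h1 with h | h
    · refine ⟨{v}, rfl, by simp [← h], ?_⟩
      have h2 : T.singletonSubgraph v ≤ (⊤ : T.Subgraph).induce {v} := by
        rw [singletonSubgraph_le_iff]
        simp
      exact (Subgraph.singletonSubgraph_connected).mono h2 (by simp)
    · obtain ⟨S, hvS, hcard, hconn⟩ := ih (by omega) (by omega)
      have hSf : S.Finite := Set.toFinite S
      obtain ⟨x, hx⟩ : ∃ x, x ∉ S := by
        by_contra hall
        push_neg at hall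
        have : S = Set.univ := Set.eq_univ_of_forall hall
        rw [this, Set.ncard_univ] at hcard
        simp at hcard
        omega
      obtain ⟨wlk⟩ := hT v x
      obtain ⟨u, hu, w, hw, hadj⟩ := exists_boundary wlk hvS hx
      refine ⟨insert w S, Set.mem_insert_of_mem _ hvS, ?_, connected_induce_insert hconn hu hadj⟩
      rw [Set.ncard_insert_of_notMem hw hSf, hcard]

lemma tree_subtree_exists {n : ℕ} {T : SimpleGraph (Fin n)} (hT : T.IsTree) (v : Fin n)
    (k : ℕ) (h1 : 1 ≤ k) (h2 : k ≤ n) :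
    Nonempty {H : T.Subgraph // IsSubtree H ∧ v ∈ H.verts ∧ H.verts.ncard = k} := by
  obtain ⟨S, hv, hcard, hconn⟩ := exists_connected_set hT.1 v k h1 h2
  exact ⟨⟨(⊤ : T.Subgraph).induce S,
    ⟨hconn, subgraph_acyclic hT.2 _⟩, hv, by simpa using hcard⟩⟩

lemma nat_card_le_one {α : Type*} (h : ∀ a b : α, a = b) : Nat.card α ≤ 1 := by
  rcases isEmpty_or_nonempty α with he | hne
  · simp [Nat.card_of_isEmpty]
  · have : Subsingleton α := ⟨h⟩
    have : Nat.card α = 1 := Nat.card_eq_one_iff_unique.mpr ⟨‹_›, hne⟩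
    omega

lemma star_induce_subtree {n : ℕ} (hn : 0 < n) (A : Set (Fin n)) (h0 : (⟨0, hn⟩ : Fin n) ∈ A) :
    IsSubtree ((⊤ : (starG n).Subgraph).induce A) := by
  set H := (⊤ : (starG n).Subgraph).induce A with hH
  have hverts : H.verts = A := rfl
  have h0v : (⟨0, hn⟩ : Fin n) ∈ H.verts := h0
  constructor
  · rw [Subgraph.connected_iff]
    refine ⟨?_, ⟨⟨0, hn⟩, h0v⟩⟩
    rw [Subgraph.preconnected_iff]
    intro x y
    ·
      have key : ∀ z : ↥H.verts, H.coe.Reachable ⟨⟨0, hn⟩, h0v⟩ z := by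
        intro z
        by_cases hz : (z : Fin n) = ⟨0, hn⟩
        · have : z = ⟨⟨0, hn⟩, h0v⟩ := Subtype.ext hz
          rw [this]
        · have hadj : H.coe.Adj ⟨⟨0, hn⟩, h0v⟩ z := by
            rw [Subgraph.coe_adj]
            refine ⟨h0, z.2, ?_⟩
            simp only [Subgraph.top_adj, starG, fromRel_adj]
            exact ⟨fun hc => hz hc.symm, Or.inl rfl⟩
          exact hadj.reachable
      exact (key x).symm.trans (key y)
  · apply acyclic_of_center (⟨⟨0, hn⟩, h0v⟩ : ↥H.verts)
    intro x y hxy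
    rw [Subgraph.coe_adj] at hxy
    have hs : (starG n).Adj x.1 y.1 := hxy.2.2
    simp only [starG, fromRel_adj] at hs
    rcases hs.2 with h' | h'
    · exact Or.inl (Subtype.ext (Fin.ext h'))
    · exact Or.inr (Subtype.ext (Fin.ext h'))

lemma nkAt_le_star {n : ℕ} (hn : 0 < n) (T : SimpleGraph (Fin n)) (hT : T.IsTree)
    (v : Fin n) (k : ℕ) : nkAt T v k ≤ nkAt (starG n) ⟨0, hn⟩ k := by
  classical
  set σ := Equiv.swap v (⟨0, hn⟩ : Fin n) with hσ
  have hσv : σ v = ⟨0, hn⟩ := Equiv.swap_apply_left _ _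
  apply Nat.card_le_card_of_injective
    (fun H => (⟨(⊤ : (starG n).Subgraph).induce (σ '' H.1.verts),
      star_induce_subtree hn _ ⟨v, H.2.2.1, hσv⟩,
      ⟨v, H.2.2.1, hσv⟩,
      by simpa [Set.ncard_image_of_injective _ σ.injective] using H.2.2.2⟩ :
      {H : (starG n).Subgraph // IsSubtree H ∧ (⟨0, hn⟩ : Fin n) ∈ H.verts ∧
        H.verts.ncard = k}))
  intro H1 H2 h
  apply Subtype.ext
  have h' := congrArg Subtype.val h
  have hverts : σ '' H1.1.verts = σ '' H2.1.verts := congrArg Subgraph.verts h'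
  have hv : H1.1.verts = H2.1.verts := (Set.image_injective.mpr σ.injective) hverts
  exact subtree_ext hT.2 H1.2.1.1 H2.2.1.1 hv

/-- with `c` the center of the star `S_n`, `ν` an endpoint of the path
`P_n`, and `v` any vertex of an `n`-vertex tree `T`, we have
`n_k(c, S_n) ≥ n_k(v, T) ≥ n_k(ν, P_n)` for every `k ≥ 0`. -/
theorem nkAt_tree_extremal (n : ℕ) (hn : 0 < n) (T : SimpleGraph (Fin n))
    (hT : T.IsTree) (v : Fin n) (k : ℕ) :
    nkAt (pathG n) ⟨0, hn⟩ k ≤ nkAt T v k ∧ nkAt T v k ≤ nkAt (starG n) ⟨0, hn⟩ k := by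
  constructor
  · by_cases hne : Nonempty {H : (pathG n).Subgraph // IsSubtree H ∧
        (⟨0, hn⟩ : Fin n) ∈ H.verts ∧ H.verts.ncard = k}
    · obtain ⟨⟨H, hH, h0, hk⟩⟩ := hne
      have hk1 : 1 ≤ k := by
        rw [← hk]
        exact (Set.ncard_pos (Set.toFinite _)).mpr ⟨_, h0⟩
      have hkn : k ≤ n := by
        rw [← hk]
        calc H.verts.ncard ≤ (Set.univ : Set (Fin n)).ncard :=
              Set.ncard_le_ncard (Set.subset_univ _) (Set.toFinite _)
          _ = n := by simp [Set.ncard_univ]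
      have hle1 : nkAt (pathG n) ⟨0, hn⟩ k ≤ 1 := by
        apply nat_card_le_one
        rintro ⟨H1, hH1, h01, hk1'⟩ ⟨H2, hH2, h02, hk2'⟩
        exact Subtype.ext (path_subtree_unique hn hH1.1 h01 hk1' hH2.1 h02 hk2')
      have hge1 : 1 ≤ nkAt T v k := by
        have hne' := tree_subtree_exists hT v k hk1 hkn
        have : 0 < nkAt T v k := by
          rw [nkAt]
          exact Nat.card_pos_iff.mpr ⟨hne', inferInstance⟩
        omega
      exact le_trans hle1 hge1
    · have h0 : nkAt (pathG n) ⟨0, hn⟩ k = 0 := by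
        rw [nkAt]
        rw [not_nonempty_iff] at hne
        exact Nat.card_of_isEmpty
      omega
  · exact nkAt_le_star hn T hT v k
end

section
/- The Hosoya index of U_1(6,4) equals 114, which is strictly less than 115, the Hosoya index of U_2(6,4). Hence among unicyclic graphs with segment sequence (6,4), the graph maximizing the Merrifield–Simmons index does not minimize the Hosoya index. -/
open SimpleGraph

open Finset in
lemma hosoya_eq_card {V : Type*} [Fintype V] [DecidableEq V] (G : SimpleGraph V)
    [DecidableRel G.Adj] :
    hosoya G =
    (G.edgeFinset.powerset.filter
      (fun t => ∀ e ∈ t, ∀ f ∈ t, e ≠ f → ∀ v, ¬(v ∈ e ∧ v ∈ f))).card := by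
  classical
  rw [hosoya]
  have e : {s : Set (Sym2 V) // s ⊆ G.edgeSet ∧
      s.Pairwise (fun e f => ∀ v, ¬(v ∈ e ∧ v ∈ f))} ≃
      {t : Finset (Sym2 V) // t ∈ G.edgeFinset.powerset.filter
        (fun t => ∀ e ∈ t, ∀ f ∈ t, e ≠ f → ∀ v, ¬(v ∈ e ∧ v ∈ f))} := by
    refine Equiv.subtypeEquiv (Fintype.finsetEquivSet (α := Sym2 V)).symm ?_
    intro s
    simp only [Fintype.finsetEquivSet_symm_apply, Finset.mem_filter, Finset.mem_powerset,
      Set.mem_toFinset]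
    constructor
    · rintro ⟨h1, h2⟩
      refine ⟨?_, fun a ha b hb hab => ?_⟩
      · rw [← SimpleGraph.coe_edgeFinset] at h1
        simpa [Set.toFinset_subset] using h1
      · exact h2 (by simpa using ha) (by simpa using hb) hab
    · rintro ⟨h1, h2⟩
      refine ⟨?_, fun a ha b hb hab => ?_⟩
      · rw [← SimpleGraph.coe_edgeFinset]
        simpa [Set.toFinset_subset] using h1
      · exact h2 a (by simpa using ha) b (by simpa using hb) hab
  rw [Nat.card_congr e, Nat.card_eq_fintype_card, Fintype.card_coe]

instance (n l : ℕ) : DecidableRel (UPnl n l).Adj := fun a b =>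
  decidable_of_iff _ (SimpleGraph.fromRel_adj _ a b).symm

set_option maxRecDepth 100000 in
set_option maxHeartbeats 8000000 in
lemma hosoya_UPnl_10_6 : hosoya (UPnl 10 6) = 114 := by
  rw [hosoya_eq_card]; decide

set_option maxRecDepth 100000 in
set_option maxHeartbeats 8000000 in
lemma hosoya_UPnl_10_4 : hosoya (UPnl 10 4) = 115 := by
  rw [hosoya_eq_card]; decide

/-- `Z(U_1(6,4)) = 114 < 115 = Z(U_2(6,4))`, where `U_1(6,4)` is `C_6`
with a pendant path of length `4` and `U_2(6,4)` is `C_4` with a pendant path of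
length `6`. -/
theorem hosoya_counterexample :
    hosoya (UPnl 10 6) = 114 ∧ hosoya (UPnl 10 4) = 115 ∧
    hosoya (UPnl 10 6) < hosoya (UPnl 10 4) := by
  refine ⟨hosoya_UPnl_10_6, hosoya_UPnl_10_4, ?_⟩
  rw [hosoya_UPnl_10_6, hosoya_UPnl_10_4]
  norm_num
end
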